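/- arXiv:2604.18558 — 2 statements merged into one kernel-verified Lean document; each statement's English description precedes it below -/
import Mathlib

section
/- Let G be a finite graph with vertex set V, and let c > 0 be such that for every vertex v ∈ V and every integer k ≥ 1, the number of connected subsets of V of cardinality k containing v is at most e^{ck}. Then for every nonempty Δ ⊆ V and every integer n ≥ |Δ|, the number of independent families of polymers of G, each of whose polymers intersects Δ, whose trace has cardinality exactly n, is at most 4^n · e^{cn}. -/
open Finset

variable {V : Type*}

/-- A polymer: a nonempty subset of vertices inducing a connected subgraph. -/
def IsPolymer (G : SimpleGraph V) (γ : Finset V) : Prop :=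
  γ.Nonempty ∧ (G.induce (↑γ : Set V)).Connected

/-- An independent family of polymers: a finite set of polymers such that the union of
any two distinct members does not induce a connected subgraph. -/
def IsIndepFamily [DecidableEq V] (G : SimpleGraph V) (Γ : Finset (Finset V)) : Prop :=
  (∀ γ ∈ Γ, IsPolymer G γ) ∧
    ∀ γ ∈ Γ, ∀ γ' ∈ Γ, γ ≠ γ' → ¬ (G.induce (↑(γ ∪ γ') : Set V)).Connected

/-- The trace of a family of polymers: the union of its members. -/
def traceFam [DecidableEq V] (Γ : Finset (Finset V)) : Finset V := Γ.sup id

section Disjoint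

variable [DecidableEq V] {G : SimpleGraph V} {Γ : Finset (Finset V)}

/-- Distinct members of an independent family are disjoint. -/
lemma disjoint_of_indep (hΓ : IsIndepFamily G Γ) {γ γ' : Finset V}
    (hγ : γ ∈ Γ) (hγ' : γ' ∈ Γ) (hne : γ ≠ γ') : Disjoint γ γ' := by
  rw [Finset.disjoint_left]
  intro x hx hx'
  apply hΓ.2 γ hγ γ' hγ' hne
  rw [Finset.coe_union]
  exact SimpleGraph.induce_union_connected (hΓ.1 γ hγ).2.preconnected (hΓ.1 γ' hγ').2.preconnected
    ⟨x, by simpa using hx, by simpa using hx'⟩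

end Disjoint

section Aux

variable [DecidableEq V] [LinearOrder V] {Δ : Finset V} {Γ : Finset (Finset V)}

/-- The member of `Γ` whose representative (the min of its intersection with `Δ`) is `v`,
or `∅` if there is none. -/
def repSet (Δ : Finset V) (Γ : Finset (Finset V)) (v : V) : Finset V :=
  (Γ.filter (fun γ => (γ ∩ Δ).min = (v : WithTop V))).sup id

variable (Hd : ∀ ⦃γ γ'⦄, γ ∈ Γ → γ' ∈ Γ → γ ≠ γ' → Disjoint γ γ')

include Hd

lemma filter_rep_eq {γ : Finset V} (hγ : γ ∈ Γ) (h : (γ ∩ Δ).Nonempty) :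
    Γ.filter (fun γ' => (γ' ∩ Δ).min = (((γ ∩ Δ).min' h : V) : WithTop V)) = {γ} := by
  apply Finset.eq_singleton_iff_unique_mem.2
  refine ⟨Finset.mem_filter.2 ⟨hγ, ((γ ∩ Δ).coe_min' h).symm⟩, ?_⟩
  intro γ' hmem
  obtain ⟨hγ', hv⟩ := Finset.mem_filter.1 hmem
  have hv' : (γ ∩ Δ).min' h ∈ γ' ∩ Δ := Finset.mem_of_min hv
  by_contra hne
  exact Finset.disjoint_left.1 (Hd hγ' hγ hne)
    (Finset.mem_inter.1 hv').1 (Finset.mem_inter.1 ((γ ∩ Δ).min'_mem h)).1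

lemma repSet_of_mem {γ : Finset V} (hγ : γ ∈ Γ) (h : (γ ∩ Δ).Nonempty) :
    repSet Δ Γ ((γ ∩ Δ).min' h) = γ := by
  rw [repSet, filter_rep_eq Hd hγ h, Finset.sup_singleton, id]

lemma repSet_spec (v : V) :
    repSet Δ Γ v = ∅ ∨ (repSet Δ Γ v ∈ Γ ∧ v ∈ repSet Δ Γ v ∧ v ∈ Δ ∧
      ((repSet Δ Γ v ∩ Δ).min = (v : WithTop V))) := by
  rcases (Γ.filter (fun γ => (γ ∩ Δ).min = (v : WithTop V))).eq_empty_or_nonempty with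
    he | ⟨γ, hγmem⟩
  · left
    rw [repSet, he, Finset.sup_empty]
    rfl
  · right
    obtain ⟨hγΓ, hγv⟩ := Finset.mem_filter.1 hγmem
    have hvγ : v ∈ γ ∩ Δ := Finset.mem_of_min hγv
    have hfil : Γ.filter (fun γ' => (γ' ∩ Δ).min = (v : WithTop V)) = {γ} := by
      apply Finset.eq_singleton_iff_unique_mem.2
      refine ⟨hγmem, ?_⟩
      intro γ' hmem
      obtain ⟨hγ', hv⟩ := Finset.mem_filter.1 hmem
      have hv' : v ∈ γ' ∩ Δ := Finset.mem_of_min hv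
      by_contra hne
      exact Finset.disjoint_left.1 (Hd hγ' hγΓ hne)
        (Finset.mem_inter.1 hv').1 (Finset.mem_inter.1 hvγ).1
    have hrep : repSet Δ Γ v = γ := by rw [repSet, hfil, Finset.sup_singleton, id]
    rw [hrep]
    exact ⟨hγΓ, (Finset.mem_inter.1 hvγ).1, (Finset.mem_inter.1 hvγ).2, hγv⟩

lemma mem_iff_repSet (Hmeet : ∀ γ ∈ Γ, (γ ∩ Δ).Nonempty) (Hne : ∀ γ ∈ Γ, γ.Nonempty)
    (γ : Finset V) : γ ∈ Γ ↔ γ ≠ ∅ ∧ ∃ v, repSet Δ Γ v = γ := by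
  constructor
  · intro hγ
    exact ⟨Finset.nonempty_iff_ne_empty.1 (Hne γ hγ), (γ ∩ Δ).min' (Hmeet γ hγ),
      repSet_of_mem Hd hγ _⟩
  · rintro ⟨hne, v, rfl⟩
    rcases repSet_spec Hd v with h | h
    · exact absurd h hne
    · exact h.1

lemma sum_card_repSet [Fintype V] (Hmeet : ∀ γ ∈ Γ, (γ ∩ Δ).Nonempty)
    (Hne : ∀ γ ∈ Γ, γ.Nonempty) :
    ∑ v : V, (repSet Δ Γ v).card = ∑ γ ∈ Γ, γ.card := by
  classical
  have hsub : (univ.filter (fun v => repSet Δ Γ v ≠ ∅)) ⊆ univ := Finset.subset_univ _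
  rw [← Finset.sum_subset hsub (by
    intro v _ hv
    simp only [Finset.mem_filter, Finset.mem_univ, true_and, not_not] at hv
    rw [hv, Finset.card_empty])]
  refine Finset.sum_bij' (fun v _ => repSet Δ Γ v)
    (fun γ hγ => (γ ∩ Δ).min' (Hmeet γ hγ)) ?_ ?_ ?_ ?_ ?_
  · intro v hv
    simp only [Finset.mem_filter, Finset.mem_univ, true_and] at hv
    rcases repSet_spec Hd v with h | h
    · exact absurd h hv
    · exact h.1
  · intro γ hγ
    simp only [Finset.mem_filter, Finset.mem_univ, true_and]
    rw [repSet_of_mem Hd hγ (Hmeet γ hγ)]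
    exact Finset.nonempty_iff_ne_empty.1 (Hne γ hγ)
  · intro v hv
    simp only [Finset.mem_filter, Finset.mem_univ, true_and] at hv
    rcases repSet_spec Hd v with h | h
    · exact absurd h hv
    · obtain ⟨hmem, -, -, hmin⟩ := h
      have hne : (repSet Δ Γ v ∩ Δ).Nonempty := Hmeet _ hmem
      have hco := (repSet Δ Γ v ∩ Δ).coe_min' hne
      rw [hmin] at hco
      have : (repSet Δ Γ v ∩ Δ).min' hne = v := by exact_mod_cast hco
      exact this
  · intro γ hγ
    exact repSet_of_mem Hd hγ (Hmeet γ hγ)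
  · intro v _
    rfl

end Aux

/-- A binomial coefficient is at most `2 ^ m`. -/
lemma choose_le_two_pow' (m k : ℕ) : m.choose k ≤ 2 ^ m := by
  by_cases h : k ≤ m
  · calc m.choose k ≤ ∑ i ∈ Finset.range (m + 1), m.choose i :=
        Finset.single_le_sum (fun i _ => Nat.zero_le _)
          (Finset.mem_range.2 (Nat.lt_succ_of_le h))
    _ = 2 ^ m := Nat.sum_range_choose m
  · rw [Nat.choose_eq_zero_of_lt (lt_of_not_ge h)]
    exact Nat.zero_le _

/-- Cardinality of a finset-indexed sum of multisets. -/
lemma multiset_card_finset_sum {X α : Type*} (s : Finset X) (f : X → Multiset α) :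
    (∑ x ∈ s, f x).card = ∑ x ∈ s, (f x).card := by
  classical
  induction s using Finset.induction with
  | empty => simp
  | insert _ _ h ih => simp [Finset.sum_insert h, ih]

/-- Let `G` be a finite graph and `c > 0` be such that for every vertex `v`
and `k ≥ 1` the number of connected subsets of cardinality `k` containing `v` is at most
`e^{ck}`.  Then for every nonempty `Δ` and `n ≥ |Δ|`, the number of independent families of
polymers, all of whose members intersect `Δ`, with trace of cardinality `n`, is at most
`4^n · e^{cn}`. -/
theorem stmt_4 [Fintype V] [DecidableEq V] (G : SimpleGraph V) (c : ℝ) (hc : 0 < c)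
    (hcount : ∀ v : V, ∀ k : ℕ, 1 ≤ k →
      (Nat.card {γ : Finset V // IsPolymer G γ ∧ γ.card = k ∧ v ∈ γ} : ℝ) ≤
        Real.exp (c * k))
    (Δ : Finset V) (hΔ : Δ.Nonempty) (n : ℕ) (hn : Δ.card ≤ n) :
    (Nat.card {Γ : Finset (Finset V) // IsIndepFamily G Γ ∧ (∀ γ ∈ Γ, (γ ∩ Δ).Nonempty) ∧
        (traceFam Γ).card = n} : ℝ) ≤ 4 ^ n * Real.exp (c * n) := by
  classical
  letI : LinearOrder V := LinearOrder.lift' (Fintype.equivFin V) (Fintype.equivFin V).injective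
  set P := {Γ : Finset (Finset V) // IsIndepFamily G Γ ∧ (∀ γ ∈ Γ, (γ ∩ Δ).Nonempty) ∧
      (traceFam Γ).card = n} with hP
  -- the set of encodings
  set S : Finset (V → Finset V) := univ.filter (fun g =>
      (∑ v : V, (g v).card = n) ∧
      ∀ v, g v = ∅ ∨ (IsPolymer G (g v) ∧ v ∈ g v ∧ v ∈ Δ)) with hS
  -- the injection
  have key : ∀ Γ : P, repSet Δ Γ.1 ∈ S := by
    rintro ⟨Γ, hΓ, hmeet, htr⟩
    have Hd : ∀ ⦃γ γ'⦄, γ ∈ Γ → γ' ∈ Γ → γ ≠ γ' → Disjoint γ γ' :=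
      fun γ γ' h h' hne => disjoint_of_indep hΓ h h' hne
    have Hne : ∀ γ ∈ Γ, γ.Nonempty := fun γ hγ => (hΓ.1 γ hγ).1
    simp only [hS, Finset.mem_filter, Finset.mem_univ, true_and]
    constructor
    · have hdisj : ∀ γ ∈ Γ, ∀ γ' ∈ Γ, γ ≠ γ' → Disjoint (id γ) (id γ') :=
        fun γ hγ γ' hγ' hne => Hd hγ hγ' hne
      rw [sum_card_repSet Hd hmeet Hne, ← htr, traceFam, Finset.sup_eq_biUnion,
        Finset.card_biUnion hdisj]
      simp
    · intro v
      rcases repSet_spec Hd v with h | h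
      · exact Or.inl h
      · exact Or.inr ⟨(hΓ.1 _ h.1), h.2.1, h.2.2.1⟩
  have Finj : Function.Injective (fun Γ : P => (⟨repSet Δ Γ.1, key Γ⟩ : {g // g ∈ S})) := by
    rintro ⟨Γ₁, hΓ₁, hmeet₁, htr₁⟩ ⟨Γ₂, hΓ₂, hmeet₂, htr₂⟩ h
    have h' : repSet Δ Γ₁ = repSet Δ Γ₂ := congrArg Subtype.val h
    have Hd₁ : ∀ ⦃γ γ'⦄, γ ∈ Γ₁ → γ' ∈ Γ₁ → γ ≠ γ' → Disjoint γ γ' :=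
      fun γ γ' ha hb hne => disjoint_of_indep hΓ₁ ha hb hne
    have Hd₂ : ∀ ⦃γ γ'⦄, γ ∈ Γ₂ → γ' ∈ Γ₂ → γ ≠ γ' → Disjoint γ γ' :=
      fun γ γ' ha hb hne => disjoint_of_indep hΓ₂ ha hb hne
    have Hne₁ : ∀ γ ∈ Γ₁, γ.Nonempty := fun γ hγ => (hΓ₁.1 γ hγ).1
    have Hne₂ : ∀ γ ∈ Γ₂, γ.Nonempty := fun γ hγ => (hΓ₂.1 γ hγ).1
    apply Subtype.ext
    ext γ
    rw [mem_iff_repSet Hd₁ hmeet₁ Hne₁, mem_iff_repSet Hd₂ hmeet₂ Hne₂, h']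
  have h1 : Nat.card P ≤ S.card := by
    have := Nat.card_le_card_of_injective _ Finj
    rwa [Nat.card_eq_finsetCard] at this
  -- the set of size profiles
  set Ks : Finset (V → ℕ) := S.image (fun g v => (g v).card) with hKs
  have hKprop : ∀ κ ∈ Ks, (∑ v : V, κ v = n) ∧ ∀ v, v ∉ Δ → κ v = 0 := by
    intro κ hκ
    obtain ⟨g, hg, rfl⟩ := Finset.mem_image.1 hκ
    simp only [hS, Finset.mem_filter, Finset.mem_univ, true_and] at hg
    refine ⟨hg.1, fun v hv => ?_⟩
    show (g v).card = 0
    rcases hg.2 v with h | h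
    · rw [h, Finset.card_empty]
    · exact absurd h.2.2 hv
  -- fiberwise counting
  have hfib : ∀ κ ∈ Ks, ((S.filter (fun g => (fun v => (g v).card) = κ)).card : ℝ)
      ≤ Real.exp (c * n) := by
    intro κ hκ
    obtain ⟨hsum, hzero⟩ := hKprop κ hκ
    set A : V → Finset (Finset V) := fun v =>
      if v ∈ Δ ∧ κ v ≠ 0 then univ.filter (fun γ => IsPolymer G γ ∧ γ.card = κ v ∧ v ∈ γ)
      else {∅} with hA
    have hsubset : S.filter (fun g => (fun v => (g v).card) = κ) ⊆ Fintype.piFinset A := by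
      intro g hg
      obtain ⟨hgS, hgκ⟩ := Finset.mem_filter.1 hg
      simp only [hS, Finset.mem_filter, Finset.mem_univ, true_and] at hgS
      have hκg : ∀ v, (g v).card = κ v := fun v => congrFun hgκ v
      rw [Fintype.mem_piFinset]
      intro v
      by_cases hv : v ∈ Δ ∧ κ v ≠ 0
      · rw [hA]
        simp only [if_pos hv, Finset.mem_filter, Finset.mem_univ, true_and]
        have hgv : g v ≠ ∅ := by
          intro h0
          apply hv.2
          rw [← hκg v, h0, Finset.card_empty]
        rcases hgS.2 v with h | h
        · exact absurd h hgv
        · exact ⟨h.1, hκg v, h.2.1⟩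
      · rw [hA]
        simp only [if_neg hv, Finset.mem_singleton]
        by_cases h0 : κ v = 0
        · have := hκg v
          rw [h0] at this
          exact Finset.card_eq_zero.1 this
        · rcases hgS.2 v with h | h
          · exact h
          · exact absurd ⟨h.2.2, h0⟩ hv
    have hAv : ∀ v : V, ((A v).card : ℝ) ≤ Real.exp (c * κ v) := by
      intro v
      by_cases hv : v ∈ Δ ∧ κ v ≠ 0
      · rw [hA]
        simp only [if_pos hv]
        have hb := hcount v (κ v) (Nat.one_le_iff_ne_zero.2 hv.2)
        have hNat : Nat.card {γ : Finset V // IsPolymer G γ ∧ γ.card = κ v ∧ v ∈ γ}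
            = (univ.filter (fun γ : Finset V => IsPolymer G γ ∧ γ.card = κ v ∧ v ∈ γ)).card := by
          rw [Nat.card_eq_fintype_card, Fintype.card_subtype]
        rw [hNat] at hb
        exact hb
      · rw [hA]
        simp only [if_neg hv, Finset.card_singleton, Nat.cast_one]
        exact Real.one_le_exp (mul_nonneg hc.le (Nat.cast_nonneg _))
    calc ((S.filter (fun g => (fun v => (g v).card) = κ)).card : ℝ)
        ≤ ((Fintype.piFinset A).card : ℝ) :=
          Nat.cast_le.2 (Finset.card_le_card hsubset)
      _ = ∏ v : V, ((A v).card : ℝ) := by rw [Fintype.card_piFinset]; push_cast; rfl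
      _ ≤ ∏ v : V, Real.exp (c * κ v) :=
          Finset.prod_le_prod (fun v _ => Nat.cast_nonneg _) (fun v _ => hAv v)
      _ = Real.exp (c * n) := by
          rw [← Real.exp_sum, ← Finset.mul_sum]
          congr 1
          rw [← Nat.cast_sum, hsum]
  have h2 : (S.card : ℝ) ≤ (Ks.card : ℝ) * Real.exp (c * n) := by
    have hcard : S.card = ∑ κ ∈ Ks, (S.filter (fun g => (fun v => (g v).card) = κ)).card :=
      Finset.card_eq_sum_card_fiberwise (fun g hg => Finset.mem_image_of_mem _ hg)
    calc (S.card : ℝ)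
        = ∑ κ ∈ Ks, ((S.filter (fun g => (fun v => (g v).card) = κ)).card : ℝ) := by
          rw [hcard]; push_cast; rfl
      _ ≤ ∑ _κ ∈ Ks, Real.exp (c * n) := Finset.sum_le_sum hfib
      _ = (Ks.card : ℝ) * Real.exp (c * n) := by rw [Finset.sum_const, nsmul_eq_mul]
  -- bounding the number of size profiles
  have h3 : Ks.card ≤ 2 ^ (Δ.card + n - 1) := by
    haveI hne : Nonempty ↥Δ := ⟨⟨hΔ.choose, hΔ.choose_spec⟩⟩
    haveI : Inhabited ↥Δ := Classical.inhabited_of_nonempty hne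
    haveI : Inhabited (Sym ↥Δ n) := ⟨Sym.replicate n default⟩
    have hcm : ∀ κ ∈ Ks, (∑ v ∈ Δ.attach, Multiset.replicate (κ ↑v) (v : ↥Δ)).card = n := by
      intro κ hκ
      rw [multiset_card_finset_sum]
      simp only [Multiset.card_replicate]
      rw [Finset.sum_attach Δ (fun v => κ v)]
      rw [← (hKprop κ hκ).1]
      exact Finset.sum_subset (Finset.subset_univ Δ)
        (fun v _ hv => (hKprop κ hκ).2 v hv) |>.symm ▸ rfl
    set ψ : (V → ℕ) → Sym ↥Δ n := fun κ =>
      if h : (∑ v ∈ Δ.attach, Multiset.replicate (κ ↑v) (v : ↥Δ)).card = n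
      then ⟨∑ v ∈ Δ.attach, Multiset.replicate (κ ↑v) (v : ↥Δ), h⟩ else default with hψ
    have hinj : Set.InjOn ψ ↑Ks := by
      intro κ₁ hκ₁ κ₂ hκ₂ heq
      simp only [Finset.mem_coe] at hκ₁ hκ₂
      rw [hψ] at heq
      simp only [dif_pos (hcm κ₁ hκ₁), dif_pos (hcm κ₂ hκ₂)] at heq
      have hmeq : (∑ v ∈ Δ.attach, Multiset.replicate (κ₁ ↑v) (v : ↥Δ))
          = ∑ v ∈ Δ.attach, Multiset.replicate (κ₂ ↑v) (v : ↥Δ) := by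
            simpa [hcm κ₁ hκ₁, hcm κ₂ hκ₂] using congrArg Subtype.val heq
      funext v
      by_cases hv : v ∈ Δ
      · have hcnt := congrArg (Multiset.count (⟨v, hv⟩ : ↥Δ)) hmeq
        simpa [Multiset.count_sum', Multiset.count_replicate, Finset.sum_ite_eq,
          Finset.mem_attach] using hcnt
      · rw [(hKprop κ₁ hκ₁).2 v hv, (hKprop κ₂ hκ₂).2 v hv]
    calc Ks.card ≤ (univ : Finset (Sym ↥Δ n)).card :=
        Finset.card_le_card_of_injOn ψ (fun _ _ => Finset.mem_univ _) hinj
      _ = Fintype.card (Sym ↥Δ n) := Finset.card_univ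
      _ = (Δ.card + n - 1).choose n := by rw [Sym.card_sym_eq_choose, Fintype.card_coe]
      _ ≤ 2 ^ (Δ.card + n - 1) := choose_le_two_pow' _ _
  have h4 : (Ks.card : ℝ) ≤ 4 ^ n := by
    calc (Ks.card : ℝ) ≤ (2 : ℝ) ^ (Δ.card + n - 1) := by exact_mod_cast h3
      _ ≤ (2 : ℝ) ^ (2 * n) := by
          apply pow_le_pow_right₀ (by norm_num)
          omega
      _ = 4 ^ n := by rw [pow_mul]; norm_num
  calc (Nat.card P : ℝ) ≤ (S.card : ℝ) := Nat.cast_le.2 h1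
    _ ≤ (Ks.card : ℝ) * Real.exp (c * n) := h2
    _ ≤ 4 ^ n * Real.exp (c * n) :=
        mul_le_mul_of_nonneg_right h4 (Real.exp_nonneg _)
end

section
/- Let (Ω, ℙ) be a finite probability space and V a finite set. For each x ∈ V, let C_x : Ω → (subsets of V) be a random subset and f_x : Ω → ℂ a random variable. For A ⊆ V write C_A := ∪_{x∈A} C_x. Let a ≥ 0, c₀ ∈ [0,1] and c ≥ 1 be real numbers such that: (i) |f_x(ω)| ≤ c₀ for all x ∈ V and ω ∈ Ω; (ii) √c₀ · e^a ≤ 1; (iii) ℙ[|C_A| ≥ n] ≤ e^{a|A| − cn} for every nonempty A ⊆ V and every integer n ≥ 1. Then for every nonempty γ ⊆ V, | Σ_{A ⊆ γ} 𝔼_ℙ[ (Π_{x∈A} f_x) · 1{C_A = γ} ] | ≤ √c₀ · e^{−(c−1)|γ|}. -/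
open Finset
open scoped Classical

/-- Let `(Ω, ℙ)` be a finite probability space, `V` a finite set, `C_x`
random subsets of `V` and `f_x` complex random variables.  Assume `|f_x| ≤ c₀ ≤ 1`,
`√c₀ · e^a ≤ 1`, and the tail bound `ℙ[|C_A| ≥ n] ≤ e^{a|A| - cn}` for nonempty `A ⊆ V`,
`n ≥ 1`, with `a ≥ 0` and `c ≥ 1`.  Then for every nonempty `γ ⊆ V`,
`|Σ_{A ⊆ γ} 𝔼[(Π_{x∈A} f_x)·1{C_A = γ}]| ≤ √c₀ · e^{-(c-1)|γ|}`. -/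
theorem stmt_7 {Ω V : Type*} [Fintype Ω] [Fintype V] [DecidableEq V]
    (P : Ω → ℝ) (hP0 : ∀ ω, 0 ≤ P ω) (hP1 : ∑ ω, P ω = 1)
    (C : V → Ω → Finset V) (f : V → Ω → ℂ)
    (a c₀ c : ℝ) (ha : 0 ≤ a) (hc₀0 : 0 ≤ c₀) (hc₀1 : c₀ ≤ 1) (hc : 1 ≤ c)
    (hf : ∀ x ω, ‖f x ω‖ ≤ c₀)
    (hsmall : Real.sqrt c₀ * Real.exp a ≤ 1)
    (htail : ∀ A : Finset V, A.Nonempty → ∀ n : ℕ, 1 ≤ n →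
      (∑ ω, if n ≤ (A.biUnion fun x => C x ω).card then P ω else 0) ≤
        Real.exp (a * A.card - c * n)) :
    ∀ γ : Finset V, γ.Nonempty →
      ‖∑ A ∈ γ.powerset, ∑ ω, (P ω : ℂ) *
          ((∏ x ∈ A, f x ω) * (if A.biUnion (fun x => C x ω) = γ then 1 else 0))‖ ≤
        Real.sqrt c₀ * Real.exp (-(c - 1) * γ.card) := by
  intro γ hγ
  set m := γ.card with hm
  have hm1 : 1 ≤ m := Finset.card_pos.mpr hγ
  have hsq0 : (0:ℝ) ≤ Real.sqrt c₀ := Real.sqrt_nonneg _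
  have hsq1 : Real.sqrt c₀ ≤ 1 := by
    rw [show (1:ℝ) = Real.sqrt 1 by simp]
    exact Real.sqrt_le_sqrt hc₀1
  have hc₀e : c₀ * Real.exp a ≤ Real.sqrt c₀ := by
    have h1 : Real.sqrt c₀ * Real.sqrt c₀ = c₀ := Real.mul_self_sqrt hc₀0
    nlinarith [Real.exp_pos a]
  have hc₀e1 : c₀ * Real.exp a ≤ 1 := hc₀e.trans hsq1
  have hc₀e0 : 0 ≤ c₀ * Real.exp a := by positivity
  -- per-A bound
  have key : ∀ A ∈ γ.powerset,
      ‖∑ ω, (P ω : ℂ) * ((∏ x ∈ A, f x ω) *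
        (if A.biUnion (fun x => C x ω) = γ then 1 else 0))‖
      ≤ Real.sqrt c₀ * Real.exp (-(c * m)) := by
    intro A _
    rcases A.eq_empty_or_nonempty with rfl | hAne
    · have hz : ∀ ω, (P ω : ℂ) * ((∏ x ∈ (∅:Finset V), f x ω) *
          (if (∅:Finset V).biUnion (fun x => C x ω) = γ then 1 else 0)) = 0 := by
        intro ω
        rw [Finset.biUnion_empty, if_neg (by rintro rfl; exact Finset.not_nonempty_empty hγ)]
        ring
      rw [Finset.sum_congr rfl (fun ω _ => hz ω)]
      simp only [Finset.sum_const_zero, norm_zero]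
      positivity
    · calc ‖∑ ω, (P ω : ℂ) * ((∏ x ∈ A, f x ω) *
            (if A.biUnion (fun x => C x ω) = γ then 1 else 0))‖
          ≤ ∑ ω, ‖(P ω : ℂ) * ((∏ x ∈ A, f x ω) *
            (if A.biUnion (fun x => C x ω) = γ then 1 else 0))‖ := by
            exact norm_sum_le _ _
        _ ≤ ∑ ω, c₀ ^ A.card * (if m ≤ (A.biUnion fun x => C x ω).card then P ω else 0) := by
            apply Finset.sum_le_sum
            intro ω _
            rw [norm_mul, norm_mul]
            rcases eq_or_ne (A.biUnion (fun x => C x ω)) γ with h | h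
            · rw [if_pos h, if_pos (by rw [h])]
              simp only [norm_one, mul_one]
              rw [Complex.norm_real, Real.norm_eq_abs, abs_of_nonneg (hP0 ω), mul_comm]
              apply mul_le_mul_of_nonneg_right _ (hP0 ω)
              rw [norm_prod]
              calc ∏ x ∈ A, ‖f x ω‖ ≤ ∏ x ∈ A, c₀ :=
                    Finset.prod_le_prod (fun x _ => norm_nonneg _)
                      (fun x _ => hf x ω)
                _ = c₀ ^ A.card := by rw [Finset.prod_const]
            · rw [if_neg h]
              simp only [norm_zero, mul_zero]
              apply mul_nonneg (pow_nonneg hc₀0 _)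
              split
              exacts [hP0 ω, le_rfl]
        _ = c₀ ^ A.card * ∑ ω, (if m ≤ (A.biUnion fun x => C x ω).card then P ω else 0) := by
            rw [Finset.mul_sum]
        _ ≤ c₀ ^ A.card * Real.exp (a * A.card - c * m) := by
            apply mul_le_mul_of_nonneg_left (htail A hAne m hm1) (by positivity)
        _ = (c₀ * Real.exp a) ^ A.card * Real.exp (-(c * m)) := by
            rw [mul_pow, ← Real.exp_nat_mul, mul_assoc, ← Real.exp_add]
            ring_nf
        _ ≤ (c₀ * Real.exp a) * Real.exp (-(c * m)) := by
            apply mul_le_mul_of_nonneg_right _ (Real.exp_pos _).le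
            calc (c₀ * Real.exp a) ^ A.card ≤ (c₀ * Real.exp a) ^ 1 :=
                  pow_le_pow_of_le_one hc₀e0 hc₀e1 (Finset.card_pos.mpr hAne)
              _ = c₀ * Real.exp a := pow_one _
        _ ≤ Real.sqrt c₀ * Real.exp (-(c * m)) :=
            mul_le_mul_of_nonneg_right hc₀e (Real.exp_pos _).le
  calc ‖∑ A ∈ γ.powerset, ∑ ω, (P ω : ℂ) *
          ((∏ x ∈ A, f x ω) * (if A.biUnion (fun x => C x ω) = γ then 1 else 0))‖
      ≤ ∑ A ∈ γ.powerset, ‖∑ ω, (P ω : ℂ) *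
          ((∏ x ∈ A, f x ω) * (if A.biUnion (fun x => C x ω) = γ then 1 else 0))‖ :=
        norm_sum_le _ _
    _ ≤ ∑ A ∈ γ.powerset, Real.sqrt c₀ * Real.exp (-(c * m)) :=
        Finset.sum_le_sum key
    _ = 2 ^ m * (Real.sqrt c₀ * Real.exp (-(c * m))) := by
        rw [Finset.sum_const, Finset.card_powerset, nsmul_eq_mul]
        push_cast
        ring
    _ ≤ Real.exp m * (Real.sqrt c₀ * Real.exp (-(c * m))) := by
        apply mul_le_mul_of_nonneg_right _ (by positivity)
        calc (2:ℝ) ^ m ≤ (Real.exp 1) ^ m := by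
              apply pow_le_pow_left₀ (by norm_num)
              nlinarith [Real.add_one_le_exp (1:ℝ)]
          _ = Real.exp m := by rw [← Real.exp_nat_mul]; ring_nf
    _ = Real.sqrt c₀ * Real.exp (-(c - 1) * m) := by
        rw [mul_left_comm, ← Real.exp_add]
        congr 1
        ring
end
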